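/- Let (C_·, φ) be an S¹-complex of modules over a commutative ring with C_n = 0 for all n < n_0 for some integer n_0, and suppose H_n(C, φ_0) = 0 for all n. Then H_n(C̃, ∂̃) = 0 for all n. -/

import Mathlib

/-- Cast along an equality of degrees. -/
def gcast (R : Type) [CommRing R] (C : ℤ → Type) [∀ n, AddCommGroup (C n)]
    [∀ n, Module R (C n)] {m n : ℤ} (h : m = n) : C m →ₗ[R] C n where
  toFun x := h ▸ x
  map_add' x y := by subst h; rfl
  map_smul' r x := by subst h; rfl

/-- An `S¹`-structure on a `ℤ`-graded module: maps `φ i` of degree `2*i - 1`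
satisfying `∑_{i+j=k} φ i ∘ φ j = 0` for all `k`. -/
def IsSOneStructure (R : Type) [CommRing R] (C : ℤ → Type) [∀ n, AddCommGroup (C n)]
    [∀ n, Module R (C n)]
    (φ : ∀ (i : ℕ) (n : ℤ), C n →ₗ[R] C (n + (2 * (i : ℤ) - 1))) : Prop :=
  ∀ (k : ℕ) (n : ℤ),
    ∑ i ∈ (Finset.range (k + 1)).attach,
      (gcast R C (show n + (2 * ((k - i.1 : ℕ) : ℤ) - 1) + (2 * (i.1 : ℤ) - 1)
            = n + 2 * (k : ℤ) - 2 by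
          have := Finset.mem_range.mp i.2; omega)).comp
        ((φ i.1 (n + (2 * ((k - i.1 : ℕ) : ℤ) - 1))).comp (φ (k - i.1) n)) = 0

/-- The degree-`n` part of `R[u] ⊗ C` with `|u| = 2`. -/
abbrev Tilde (C : ℤ → Type) [∀ n, AddCommGroup (C n)] (n : ℤ) : Type :=
  Π₀ ℓ : ℕ, C (n - 2 * (ℓ : ℤ))

/-- The equivariant differential `∂̃(u^ℓ ⊗ x) = ∑_{j ≤ ℓ} u^{ℓ-j} ⊗ φ j x`. -/
noncomputable def tildeD (R : Type) [CommRing R] (C : ℤ → Type) [∀ n, AddCommGroup (C n)]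
    [∀ n, Module R (C n)]
    (φ : ∀ (i : ℕ) (n : ℤ), C n →ₗ[R] C (n + (2 * (i : ℤ) - 1))) (n : ℤ) :
    Tilde C n →ₗ[R] Tilde C (n - 1) :=
  DFinsupp.lsum ℕ fun ℓ =>
    ∑ j ∈ (Finset.range (ℓ + 1)).attach,
      (DFinsupp.lsingle (ℓ - j.1)).comp
        ((gcast R C (show n - 2 * (ℓ : ℤ) + (2 * (j.1 : ℤ) - 1)
              = n - 1 - 2 * ((ℓ - j.1 : ℕ) : ℤ) by
            have := Finset.mem_range.mp j.2; omega)).comp (φ j.1 (n - 2 * (ℓ : ℤ))))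

section Helpers
variable (R : Type) [CommRing R] (C : ℤ → Type) [∀ n, AddCommGroup (C n)]
    [∀ n, Module R (C n)]

theorem gcast_gcast {a b c : ℤ} (h1 : a = b) (h2 : b = c) (x : C a) :
    gcast R C h2 (gcast R C h1 x) = gcast R C (h1.trans h2) x := by subst h1 h2; rfl

theorem gcast_rfl {a : ℤ} (x : C a) : gcast R C rfl x = x := rfl

theorem gcast_eq_zero_iff {a b : ℤ} (h : a = b) (x : C a) :
    gcast R C h x = 0 ↔ x = 0 := by subst h; exact Iff.rfl

variable (φ : ∀ (i : ℕ) (n : ℤ), C n →ₗ[R] C (n + (2 * (i : ℤ) - 1)))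

theorem phi_gcast {j : ℕ} {a b c : ℤ} (h : a = b) (h1 : b + (2 * (j:ℤ) - 1) = c)
    (h2 : a + (2 * (j:ℤ) - 1) = c) (x : C a) :
    gcast R C h1 (φ j b (gcast R C h x)) = gcast R C h2 (φ j a x) := by subst h; rfl

theorem gcast_tilde_single {a b : ℤ} (h : a = b) (ℓ : ℕ) (x : C (a - 2 * (ℓ:ℤ)))
    (h' : a - 2 * (ℓ:ℤ) = b - 2 * (ℓ:ℤ)) :
    gcast R (fun m => Tilde C m) h (DFinsupp.single ℓ x)
      = DFinsupp.single ℓ (gcast R C h' x) := by subst h; rfl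

theorem gcast_tildeD {a b : ℤ} (h : a = b) (h' : a - 1 = b - 1) (x : Tilde C a) :
    tildeD R C φ b (gcast R (fun m => Tilde C m) h x)
      = gcast R (fun m => Tilde C m) h' (tildeD R C φ a x) := by subst h; rfl

theorem tildeD_single (n : ℤ) (ℓ : ℕ) (y : C (n - 2 * (ℓ:ℤ))) :
    tildeD R C φ n (DFinsupp.single ℓ y)
      = ∑ j ∈ (Finset.range (ℓ + 1)).attach,
          DFinsupp.single (ℓ - j.1)
            (gcast R C (show n - 2 * (ℓ : ℤ) + (2 * (j.1 : ℤ) - 1)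
                = n - 1 - 2 * ((ℓ - j.1 : ℕ) : ℤ) by
              have := Finset.mem_range.mp j.2; omega) (φ j.1 (n - 2 * (ℓ:ℤ)) y)) := by
  rw [tildeD, DFinsupp.lsum_single, LinearMap.sum_apply]
  rfl

end Helpers

section DD
variable (R : Type) [CommRing R] (C : ℤ → Type) [∀ n, AddCommGroup (C n)]
    [∀ n, Module R (C n)]
    (φ : ∀ (i : ℕ) (n : ℤ), C n →ₗ[R] C (n + (2 * (i : ℤ) - 1)))

theorem single_congr {n : ℤ} {m m' : ℕ} (h : m = m') (x : C (n - 2 * (m:ℤ)))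
    (h' : n - 2 * (m:ℤ) = n - 2 * (m':ℤ)) :
    (DFinsupp.single m x : Tilde C n) = DFinsupp.single m' (gcast R C h' x) := by
  subst h; rfl

theorem key_congr {N : ℤ} (i : ℕ) {u v : ℕ} (huv : u = v) {s1 s2 : ℕ} (hs : s1 = s2)
    {a m1 w : ℤ} (z : C a)
    (h1 : a + (2*(u:ℤ)-1) = m1)
    (hA : m1 + (2*(i:ℤ)-1) = N - 2*(s1:ℤ))
    (hC : a + (2*(v:ℤ)-1) + (2*(i:ℤ)-1) = w)
    (hB : w = N - 2*(s2:ℤ)) :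
    (DFinsupp.single s1 (gcast R C hA ((φ i m1) (gcast R C h1 ((φ u a) z)))) : Tilde C N)
      = DFinsupp.single s2 (gcast R C hB (gcast R C hC ((φ i (a + (2*(v:ℤ)-1))) ((φ v a) z)))) := by
  subst huv hs h1 hC; rfl

theorem dd_single (hφ : IsSOneStructure R C φ) (n : ℤ) (ℓ : ℕ) (y : C (n - 2 * (ℓ:ℤ))) :
    tildeD R C φ (n-1) (tildeD R C φ n (DFinsupp.single ℓ y)) = 0 := by
  rw [tildeD_single, map_sum]
  simp only [tildeD_single R C φ (n-1)]
  trans ∑ p ∈ (Finset.range (ℓ+1)).attach.sigma (fun x => (Finset.range (ℓ - x.1 + 1)).attach),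
      DFinsupp.single (ℓ - p.1.1 - p.2.1)
        (gcast R C (show (n-1) - 2 * ((ℓ - p.1.1 : ℕ):ℤ) + (2 * (p.2.1:ℤ) - 1)
              = (n-1) - 1 - 2 * (((ℓ - p.1.1) - p.2.1 : ℕ) : ℤ) by
            have h1 := Finset.mem_range.mp p.1.2
            have h2 := Finset.mem_range.mp p.2.2
            omega)
          ((φ p.2.1 ((n-1) - 2 * ((ℓ - p.1.1 : ℕ):ℤ)))
            (gcast R C (show n - 2 * (ℓ:ℤ) + (2 * (p.1.1:ℤ) - 1)
                  = (n-1) - 2 * ((ℓ - p.1.1 : ℕ):ℤ) by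
                have h1 := Finset.mem_range.mp p.1.2
                omega)
              ((φ p.1.1 (n - 2 * (ℓ:ℤ))) y))))
  · rw [Finset.sum_sigma']
  trans ∑ q ∈ (Finset.range (ℓ+1)).attach.sigma (fun k => (Finset.range (k.1+1)).attach),
      DFinsupp.single (ℓ - q.1.1)
        (gcast R C (show (n - 2 * (ℓ:ℤ)) + 2 * (q.1.1:ℤ) - 2
              = (n-1) - 1 - 2 * ((ℓ - q.1.1 : ℕ):ℤ) by
            have h1 := Finset.mem_range.mp q.1.2; omega)
          (gcast R C (show (n - 2 * (ℓ:ℤ)) + (2 * ((q.1.1 - q.2.1 : ℕ) : ℤ) - 1) + (2 * (q.2.1:ℤ) - 1)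
                = (n - 2 * (ℓ:ℤ)) + 2 * (q.1.1:ℤ) - 2 by
              have h2 := Finset.mem_range.mp q.2.2; omega)
            ((φ q.2.1 ((n - 2 * (ℓ:ℤ)) + (2 * ((q.1.1 - q.2.1 : ℕ) : ℤ) - 1)))
              ((φ (q.1.1 - q.2.1) (n - 2 * (ℓ:ℤ))) y))))
  · refine Finset.sum_nbij'
      (fun p => ⟨⟨p.1.1 + p.2.1, by
          have h1 := Finset.mem_range.mp p.1.2
          have h2 := Finset.mem_range.mp p.2.2
          exact Finset.mem_range.mpr (by omega)⟩,
        ⟨p.2.1, Finset.mem_range.mpr (Nat.lt_succ_of_le (Nat.le_add_left _ _))⟩⟩)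
      (fun q => ⟨⟨q.1.1 - q.2.1, by
          have h1 := Finset.mem_range.mp q.1.2
          exact Finset.mem_range.mpr (by omega)⟩,
        ⟨q.2.1, by
          have h1 := Finset.mem_range.mp q.1.2
          have h2 := Finset.mem_range.mp q.2.2
          exact Finset.mem_range.mpr (show q.2.1 < ℓ - (q.1.1 - q.2.1) + 1 by omega)⟩⟩)
      (fun p _ => Finset.mem_sigma.mpr ⟨Finset.mem_attach _ _, Finset.mem_attach _ _⟩)
      (fun q _ => Finset.mem_sigma.mpr ⟨Finset.mem_attach _ _, Finset.mem_attach _ _⟩)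
      (fun p _ => by
        refine Sigma.subtype_ext (Subtype.ext ?_) ?_ <;> simp)
      (fun q _ => by
        have h1 := Finset.mem_range.mp q.1.2
        have h2 := Finset.mem_range.mp q.2.2
        refine Sigma.subtype_ext (Subtype.ext ?_) ?_ <;> simp <;> omega)
      (fun p _ => by
        obtain ⟨⟨x, hx⟩, ⟨j, hj⟩⟩ := p
        have h1 := Finset.mem_range.mp hx
        have h2 := Finset.mem_range.mp hj
        dsimp only
        exact key_congr R C φ j (by dsimp only; omega) (by omega) y _ _ _ _)
  · rw [Finset.sum_sigma]
    refine Finset.sum_eq_zero fun k _ => ?_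
    have hk := Finset.mem_range.mp k.2
    have h0 := LinearMap.congr_fun (hφ k.1 (n - 2 * (ℓ:ℤ))) y
    rw [LinearMap.sum_apply] at h0
    simp only [LinearMap.comp_apply, LinearMap.zero_apply] at h0
    trans (DFinsupp.lsingle (R := R) (M := fun (m : ℕ) => C ((n-1) - 1 - 2 * (m:ℤ))) (ℓ - k.1))
        (gcast R C (show (n - 2 * (ℓ:ℤ)) + 2 * (k.1:ℤ) - 2
              = (n-1) - 1 - 2 * ((ℓ - k.1 : ℕ):ℤ) by omega)
          (∑ i ∈ (Finset.range (k.1 + 1)).attach,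
            gcast R C (show (n - 2 * (ℓ:ℤ)) + (2 * ((k.1 - i.1 : ℕ) : ℤ) - 1) + (2 * (i.1:ℤ) - 1)
                  = (n - 2 * (ℓ:ℤ)) + 2 * (k.1:ℤ) - 2 by
                have h2 := Finset.mem_range.mp i.2; omega)
              ((φ i.1 ((n - 2 * (ℓ:ℤ)) + (2 * ((k.1 - i.1 : ℕ) : ℤ) - 1)))
                ((φ (k.1 - i.1) (n - 2 * (ℓ:ℤ))) y))))
    · rw [map_sum, map_sum]
      exact Finset.sum_congr rfl fun _ _ => rfl
    · rw [h0]
      simp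

section Main
variable (R : Type) [CommRing R] (C : ℤ → Type) [∀ n, AddCommGroup (C n)]
    [∀ n, Module R (C n)]
    (φ : ∀ (i : ℕ) (n : ℤ), C n →ₗ[R] C (n + (2 * (i : ℤ) - 1)))

theorem phi_index_congr {i i' : ℕ} (h : i = i') {a t : ℤ}
    (h1 : a + (2*(i:ℤ)-1) = t) (h2 : a + (2*(i':ℤ)-1) = t) (x : C a) :
    gcast R C h1 (φ i a x) = gcast R C h2 (φ i' a x) := by subst h; rfl

theorem single_apply_of_eq {N : ℤ} {a b : ℕ} (h : a = b) (v : C (N - 2*(a:ℤ)))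
    (h' : N - 2*(a:ℤ) = N - 2*(b:ℤ)) :
    (DFinsupp.single a v : Tilde C N) b = gcast R C h' v := by
  subst h; simp [gcast_rfl]

theorem gcast_tilde_apply {a b : ℤ} (h : a = b) (z : Tilde C a) (ℓ : ℕ)
    (h' : a - 2*(ℓ:ℤ) = b - 2*(ℓ:ℤ)) :
    (gcast R (fun m => Tilde C m) h z) ℓ = gcast R C h' (z ℓ) := by subst h; rfl

theorem eq_sum_single (n : ℤ) (L : ℕ) (x : Tilde C n) (h : ∀ ℓ, L < ℓ → x ℓ = 0) :
    x = ∑ ℓ ∈ Finset.range (L+1), DFinsupp.single ℓ (x ℓ) := by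
  ext m
  rw [DFinsupp.finset_sum_apply]
  by_cases hm : m ≤ L
  · rw [Finset.sum_eq_single_of_mem m (Finset.mem_range.mpr (by omega))]
    · simp
    · intro ℓ _ hne
      exact DFinsupp.single_eq_of_ne hne.symm
  · rw [h m (by omega), Finset.sum_eq_zero]
    intro ℓ hℓ
    exact DFinsupp.single_eq_of_ne (by have := Finset.mem_range.mp hℓ; omega)

theorem tildeD_single_apply (n : ℤ) (ℓ m : ℕ) (y : C (n - 2 * (ℓ:ℤ))) :
    (tildeD R C φ n (DFinsupp.single ℓ y)) m
      = if h : m ≤ ℓ then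
          gcast R C (show n - 2 * (ℓ:ℤ) + (2 * ((ℓ - m : ℕ) : ℤ) - 1)
              = n - 1 - 2 * (m:ℤ) by omega) (φ (ℓ - m) (n - 2 * (ℓ:ℤ)) y)
        else 0 := by
  rw [tildeD_single, DFinsupp.finset_sum_apply]
  by_cases h : m ≤ ℓ
  · rw [dif_pos h]
    rw [Finset.sum_eq_single_of_mem ⟨ℓ - m, Finset.mem_range.mpr (by omega)⟩
      (Finset.mem_attach _ _)]
    · rw [single_apply_of_eq R C (show ℓ - (ℓ - m) = m by omega) _ (by omega),
        gcast_gcast]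
    · intro j _ hj
      refine DFinsupp.single_eq_of_ne ?_
      have h1 := Finset.mem_range.mp j.2
      have h2 : j.1 ≠ ℓ - m := fun hc => hj (Subtype.ext hc)
      omega
  · rw [dif_neg h, Finset.sum_eq_zero]
    intro j _
    refine DFinsupp.single_eq_of_ne ?_
    have h1 := Finset.mem_range.mp j.2
    omega

theorem cycle_top (n : ℤ) (L : ℕ) (x : Tilde C n) (h : ∀ ℓ, L < ℓ → x ℓ = 0) :
    (tildeD R C φ n x) L
      = gcast R C (show n - 2*(L:ℤ) + (2 * ((0:ℕ):ℤ) - 1) = n - 1 - 2*(L:ℤ) by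
          push_cast; ring) (φ 0 (n - 2*(L:ℤ)) (x L)) := by
  conv_lhs => rw [eq_sum_single C n L x h]
  rw [map_sum, DFinsupp.finset_sum_apply]
  rw [Finset.sum_eq_single_of_mem L (Finset.mem_range.mpr (by omega))]
  · rw [tildeD_single_apply, dif_pos (le_refl L)]
    exact phi_index_congr R C φ (by omega) _ _ _
  · intro ℓ hℓ hne
    rw [tildeD_single_apply, dif_neg]
    have := Finset.mem_range.mp hℓ
    omega

end Main

/-- If `(C, φ)` is an `S¹`-complex which is bounded below
(`C_n = 0` for `n < n₀`) and whose homology `H_*(C, φ_0)` vanishes (every cycle of `C`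
is a boundary), then the equivariant homology vanishes: every cycle of `(C̃, ∂̃)` is a
boundary. -/
theorem sone_vanishing_implies_equivariant_vanishing (R : Type) [CommRing R] (C : ℤ → Type)
    [∀ n, AddCommGroup (C n)] [∀ n, Module R (C n)]
    (φ : ∀ (i : ℕ) (n : ℤ), C n →ₗ[R] C (n + (2 * (i : ℤ) - 1)))
    (hφ : IsSOneStructure R C φ)
    (n₀ : ℤ) (hbd : ∀ n : ℤ, n < n₀ → Subsingleton (C n))
    (hvan : ∀ (n : ℤ) (x : C n), φ 0 n x = 0 →
      ∃ y : C (n + 1),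
        gcast R C (show n + 1 + (2 * ((0 : ℕ) : ℤ) - 1) = n by push_cast; ring)
          (φ 0 (n + 1) y) = x) :
    ∀ (n : ℤ) (x : Tilde C n), tildeD R C φ n x = 0 →
      ∃ y : Tilde C (n + 1),
        gcast R (fun m => Tilde C m) (show n + 1 - 1 = n by ring) (tildeD R C φ (n + 1) y)
          = x := by
  intro n
  classical
  suffices main : ∀ L : ℕ, ∀ x : Tilde C n, (∀ ℓ, L ≤ ℓ → x ℓ = 0) → tildeD R C φ n x = 0 →
      ∃ y : Tilde C (n + 1),
        gcast R (fun m => Tilde C m) (show n + 1 - 1 = n by ring) (tildeD R C φ (n + 1) y)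
          = x by
    intro x hx
    refine main (x.support.sup id + 1) x (fun ℓ hℓ => ?_) hx
    by_contra hne
    have hmem : ℓ ∈ x.support := DFinsupp.mem_support_iff.mpr hne
    have := Finset.le_sup (f := id) hmem
    simp only [id] at this
    omega
  intro L
  induction L with
  | zero =>
    intro x hx _
    have : x = 0 := DFinsupp.ext fun ℓ => hx ℓ (Nat.zero_le _)
    subst this
    exact ⟨0, by simp⟩
  | succ L IH =>
    intro x hsupp hcyc
    have hsupp' : ∀ ℓ, L < ℓ → x ℓ = 0 := fun ℓ h => hsupp ℓ h
    -- top coefficient is a cycle of (C, φ 0)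
    have h1 : (tildeD R C φ n x) L = 0 := by rw [hcyc]; rfl
    rw [cycle_top R C φ n L x hsupp'] at h1
    have htop : φ 0 (n - 2*(L:ℤ)) (x L) = 0 := (gcast_eq_zero_iff R C _ _).mp h1
    obtain ⟨y₀, hy₀⟩ := hvan (n - 2*(L:ℤ)) (x L) htop
    -- lift it and kill the top coefficient
    set y₁ : C (n + 1 - 2*(L:ℤ)) :=
      gcast R C (show n - 2*(L:ℤ) + 1 = n + 1 - 2*(L:ℤ) by ring) y₀ with hy₁
    set w : Tilde C n :=
      gcast R (fun m => Tilde C m) (show n + 1 - 1 = n by ring)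
        (tildeD R C φ (n+1) (DFinsupp.single L y₁)) with hw
    have hwcyc : tildeD R C φ n w = 0 := by
      rw [hw, gcast_tildeD R C φ _ (show n + 1 - 1 - 1 = n - 1 by ring),
        dd_single R C φ hφ (n+1) L y₁, map_zero]
    have hwtop : w L = x L := by
      rw [hw, gcast_tilde_apply R C _ _ _ (by ring),
        tildeD_single_apply R C φ (n+1) L L y₁, dif_pos (le_refl L), gcast_gcast,
        phi_index_congr R C φ (show L - L = 0 by omega) _
          (show n + 1 - 2*(L:ℤ) + (2 * ((0:ℕ):ℤ) - 1) = n - 2*(L:ℤ) by push_cast; ring),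
        hy₁, phi_gcast R C φ _ _
          (show n - 2*(L:ℤ) + 1 + (2 * ((0:ℕ):ℤ) - 1) = n - 2*(L:ℤ) by push_cast; ring)]
      exact hy₀
    have hwhi : ∀ ℓ, L < ℓ → w ℓ = 0 := by
      intro ℓ hℓ
      rw [hw, gcast_tilde_apply R C _ _ _ (by ring),
        tildeD_single_apply R C φ (n+1) L ℓ y₁, dif_neg (by omega), map_zero]
    obtain ⟨y', hy'⟩ := IH (x - w) (fun ℓ hℓ => by
        rcases eq_or_lt_of_le hℓ with h | h
        · rw [DFinsupp.sub_apply, ← h, hwtop, sub_self]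
        · rw [DFinsupp.sub_apply, hsupp' ℓ h, hwhi ℓ h, sub_self])
      (by rw [map_sub, hcyc, hwcyc, sub_self])
    refine ⟨y' + DFinsupp.single L y₁, ?_⟩
    rw [map_add, map_add, hy', hw]
    abel
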